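/- Let π ∈ Δ_K be a probability vector with all coordinates positive and let 0 < β₁ < β₂. Define π_β ∈ Δ_K by (π_β)_k = π_k^β / Σ_j π_j^β. Then for every convex function φ: ℝ → ℝ, Σ_{k=1}^K φ((π_{β₁})_k) ≤ Σ_{k=1}^K φ((π_{β₂})_k) (i.e., π_{β₂} majorises π_{β₁}). -/

import Mathlib

open Real Finset

private lemma incr_mono {φ : ℝ → ℝ} (hφ : ConvexOn ℝ Set.univ φ) {u v d : ℝ}
    (huv : u ≤ v) (hd : 0 ≤ d) : φ (u + d) - φ u ≤ φ (v + d) - φ v := by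
  rcases eq_or_lt_of_le hd with rfl | hd
  · simp
  have h1 : (φ (u + d) - φ u) / ((u + d) - u) ≤ (φ (v + d) - φ u) / ((v + d) - u) :=
    hφ.secant_mono trivial trivial trivial (by intro h; nlinarith [congrArg (· - u) h])
      (by intro h; nlinarith [congrArg (· - u) h]) (by linarith)
  have h2 : (φ u - φ (v + d)) / (u - (v + d)) ≤ (φ v - φ (v + d)) / (v - (v + d)) :=
    hφ.secant_mono trivial trivial trivial
      (by intro h; nlinarith [congrArg (· - (v + d)) h])
      (by intro h; nlinarith [congrArg (· - (v + d)) h]) huv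
  have e1 : (φ u - φ (v + d)) / (u - (v + d)) = (φ (v + d) - φ u) / ((v + d) - u) := by
    rw [← neg_div_neg_eq]; ring_nf
  have e2 : (φ v - φ (v + d)) / (v - (v + d)) = (φ (v + d) - φ v) / d := by
    rw [← neg_div_neg_eq]; ring_nf
  have e3 : (φ (u + d) - φ u) / ((u + d) - u) = (φ (u + d) - φ u) / d := by ring_nf
  rw [e3] at h1; rw [e1, e2] at h2
  have := h1.trans h2
  calc φ (u + d) - φ u = (φ (u + d) - φ u) / d * d := by field_simp
    _ ≤ (φ (v + d) - φ v) / d * d := by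
        exact mul_le_mul_of_nonneg_right this hd.le
    _ = φ (v + d) - φ v := by field_simp

private lemma key_ineq {φ : ℝ → ℝ} (hφ : ConvexOn ℝ Set.univ φ) {s a b : ℝ}
    (h : (s ≤ a ∧ a ≤ b) ∨ (b ≤ a ∧ a ≤ s)) :
    φ (s + (b - a)) - φ s ≤ φ b - φ a := by
  rcases h with ⟨h1, h2⟩ | ⟨h1, h2⟩
  · have := incr_mono hφ h1 (by linarith : (0:ℝ) ≤ b - a)
    have e : a + (b - a) = b := by ring
    rwa [e] at this
  · have := incr_mono hφ (show b ≤ s + (b - a) by linarith) (by linarith : (0:ℝ) ≤ a - b)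
    have e1 : b + (a - b) = a := by ring
    have e2 : s + (b - a) + (a - b) = s := by ring
    rw [e1, e2] at this; linarith

theorem tempered_majorisation {K : ℕ} (hK : 1 ≤ K) (p : Fin K → ℝ)
    (hpos : ∀ k, 0 < p k) (hsum : ∑ k, p k = 1)
    (β₁ β₂ : ℝ) (h1 : 0 < β₁) (h12 : β₁ < β₂)
    (φ : ℝ → ℝ) (hφ : ConvexOn ℝ Set.univ φ) :
    ∑ k, φ (p k ^ β₁ / ∑ j, p j ^ β₁) ≤ ∑ k, φ (p k ^ β₂ / ∑ j, p j ^ β₂) := by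
  have hK0 : 0 < K := hK
  have hne : (Finset.univ : Finset (Fin K)).Nonempty := ⟨⟨0, hK0⟩, mem_univ _⟩
  set S₁ := ∑ j, p j ^ β₁ with hS₁def
  set S₂ := ∑ j, p j ^ β₂ with hS₂def
  have hS₁ : 0 < S₁ := Finset.sum_pos (fun j _ => rpow_pos_of_pos (hpos j) _) hne
  have hS₂ : 0 < S₂ := Finset.sum_pos (fun j _ => rpow_pos_of_pos (hpos j) _) hne
  set a : Fin K → ℝ := fun k => p k ^ β₁ / S₁ with hadef
  set b : Fin K → ℝ := fun k => p k ^ β₂ / S₂ with hbdef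
  set c : ℝ := (S₂ / S₁) ^ (1 / (β₂ - β₁)) with hcdef
  have hc : 0 < c := rpow_pos_of_pos (div_pos hS₂ hS₁) _
  have hce : c ^ (β₂ - β₁) = S₂ / S₁ := by
    rw [hcdef, ← Real.rpow_mul (div_pos hS₂ hS₁).le, one_div,
      inv_mul_cancel₀ (by linarith : β₂ - β₁ ≠ 0), Real.rpow_one]
  have hS2eq : S₂ = c ^ (β₂ - β₁) * S₁ := by rw [hce]; field_simp
  set s : ℝ := c ^ β₁ / S₁ with hsdef
  have hsplit : ∀ k, p k ^ β₂ = p k ^ β₁ * p k ^ (β₂ - β₁) := fun k => by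
    rw [← Real.rpow_add (hpos k)]; ring_nf
  have hsign : ∀ k, (s ≤ a k ∧ a k ≤ b k) ∨ (b k ≤ a k ∧ a k ≤ s) := by
    intro k
    rcases le_total c (p k) with h | h
    · left
      constructor
      · show c ^ β₁ / S₁ ≤ p k ^ β₁ / S₁
        gcongr
      · rw [hadef, hbdef]
        rw [div_le_div_iff₀ hS₁ hS₂]
        have hpc : c ^ (β₂ - β₁) ≤ p k ^ (β₂ - β₁) := rpow_le_rpow hc.le h (by linarith)
        have hp1 : 0 < p k ^ β₁ := rpow_pos_of_pos (hpos k) _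
        rw [hsplit k, hS2eq]
        nlinarith [mul_le_mul_of_nonneg_left hpc hp1.le]
    · right
      constructor
      · rw [hadef, hbdef]
        rw [div_le_div_iff₀ hS₂ hS₁]
        have hpc : p k ^ (β₂ - β₁) ≤ c ^ (β₂ - β₁) := rpow_le_rpow (hpos k).le h (by linarith)
        have hp1 : 0 < p k ^ β₁ := rpow_pos_of_pos (hpos k) _
        rw [hsplit k, hS2eq]
        nlinarith [mul_le_mul_of_nonneg_left hpc hp1.le]
      · show p k ^ β₁ / S₁ ≤ c ^ β₁ / S₁
        gcongr
        exact (hpos k).le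
  have hsa : ∑ k, a k = 1 := by rw [hadef]; simp only []; rw [← Finset.sum_div, div_self hS₁.ne']
  have hsb : ∑ k, b k = 1 := by rw [hbdef]; simp only []; rw [← Finset.sum_div, div_self hS₂.ne']
  have step1 : ∑ k, (φ (s + (b k - a k)) - φ s) ≤ ∑ k, (φ (b k) - φ (a k)) :=
    Finset.sum_le_sum fun k _ => key_ineq hφ (hsign k)
  have hw : ∑ _k : Fin K, (1 / (K:ℝ)) = 1 := by
    rw [Finset.sum_const, card_univ, Fintype.card_fin, nsmul_eq_mul]
    field_simp
  have hj : φ (∑ k, (1 / (K:ℝ)) • (s + (b k - a k)))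
      ≤ ∑ k, (1 / (K:ℝ)) • φ (s + (b k - a k)) :=
    hφ.map_sum_le (fun _ _ => by positivity) hw (fun _ _ => trivial)
  have harg : ∑ k, (1 / (K:ℝ)) • (s + (b k - a k)) = s := by
    simp only [smul_eq_mul]
    rw [← Finset.mul_sum]
    have hsum' : ∑ k, (s + (b k - a k)) = (K:ℝ) * s := by
      rw [Finset.sum_add_distrib, Finset.sum_sub_distrib, hsa, hsb,
        Finset.sum_const, card_univ, Fintype.card_fin, nsmul_eq_mul]
      ring
    rw [hsum']
    field_simp
  rw [harg] at hj
  have hK' : (0:ℝ) < (K:ℝ) := by exact_mod_cast hK0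
  have hjensen : (K:ℝ) * φ s ≤ ∑ k, φ (s + (b k - a k)) := by
    have := hj
    simp only [smul_eq_mul] at this
    rw [← Finset.mul_sum] at this
    rw [mul_comm]
    calc φ s * (K:ℝ) ≤ (1 / (K:ℝ)) * (∑ k, φ (s + (b k - a k))) * (K:ℝ) :=
          mul_le_mul_of_nonneg_right this hK'.le
      _ = ∑ k, φ (s + (b k - a k)) := by field_simp
  have expand1 : ∑ k, (φ (s + (b k - a k)) - φ s)
      = (∑ k, φ (s + (b k - a k))) - (K:ℝ) * φ s := by
    rw [Finset.sum_sub_distrib, Finset.sum_const, card_univ, Fintype.card_fin, nsmul_eq_mul]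
  have expand2 : ∑ k, (φ (b k) - φ (a k)) = (∑ k, φ (b k)) - ∑ k, φ (a k) :=
    Finset.sum_sub_distrib _ _
  rw [expand1, expand2] at step1
  linarith
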